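/- Gaussian off-diagonal to Hölder-gain estimate: if a Gaussian-type kernel q(t,s,x,y) := (s−t)^{-n²d/2} exp(−c(s−t)|T_{s−t}^{-1}(θ(x) − y)|²) with c > 0 has total mass ∫_{ℝ^{nd}} q(t,s,x,y) dy ≤ C₀ uniformly, then for every γ ∈ (0,1] there exists C such that ∫_{ℝ^{nd}} q(t,s,x,y) d(θ(x), y)^γ dy ≤ C (s−t)^{γ/2} for all 0 ≤ t < s ≤ T. -/

import Mathlib

open scoped BigOperators
open MeasureTheory

/-- The anisotropic quasi-distance on `ℝ^{nd}` realized as `(Fin n × Fin d) → ℝ`: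
`d(u,v) = ∑_i |v_i - u_i|^{1/(2i-1)}` with `|·|` the Euclidean norm of the `i`-th block. -/
noncomputable def quasiDistV (n d : ℕ) (u v : (Fin n × Fin d) → ℝ) : ℝ :=
  ∑ i : Fin n,
    (Real.sqrt (∑ j : Fin d, (v (i, j) - u (i, j)) ^ 2)) ^ ((1 : ℝ) / (2 * (i : ℕ) + 1))

/-- The Gaussian-type kernel
`q(t,s,x,y) = (s-t)^{-n²d/2} exp(-c (s-t) |T_{s-t}⁻¹ (θ(x) - y)|²)`. -/
noncomputable def gaussKer (n d : ℕ) (c : ℝ) (θ : ((Fin n × Fin d) → ℝ) → (Fin n × Fin d) → ℝ)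
    (t s : ℝ) (x y : (Fin n × Fin d) → ℝ) : ℝ :=
  (s - t) ^ (-(((n : ℝ) ^ 2 * (d : ℝ)) / 2)) *
    Real.exp (-(c * (s - t) *
      ∑ p : Fin n × Fin d, ((s - t) ^ (-(((p.1 : ℕ) : ℝ) + 1)) * (θ x p - y p)) ^ 2))

namespace GaussHolderAux

lemma rpow_min_le {δ a b e : ℝ} (hδ : 0 < δ) (hae : a ≤ e) (heb : e ≤ b) :
    min (δ ^ a) (δ ^ b) ≤ δ ^ e := by
  rcases le_total δ 1 with h1 | h1
  · exact (min_le_right _ _).trans (Real.rpow_le_rpow_of_exponent_ge hδ h1 heb)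
  · exact (min_le_left _ _).trans (Real.rpow_le_rpow_of_exponent_le h1 hae)

lemma sqrt_mul_exp_le {c B : ℝ} (hc : 0 < c) (hB : 0 ≤ B) :
    Real.sqrt B * Real.exp (-(c / 2 * B)) ≤ Real.sqrt (1 / c) := by
  have hsq : Real.exp (-(c / 2 * B)) ^ 2 = Real.exp (-(c * B)) := by
    rw [sq, ← Real.exp_add]; congr 1; ring
  have h1 : Real.exp (-(c / 2 * B)) = Real.sqrt (Real.exp (-(c * B))) := by
    rw [← hsq, Real.sqrt_sq (Real.exp_nonneg _)]
  rw [h1, ← Real.sqrt_mul hB]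
  apply Real.sqrt_le_sqrt
  have hcb : c * B ≤ Real.exp (c * B) := by
    have := Real.add_one_le_exp (c * B); linarith
  rw [le_div_iff₀ hc]
  calc B * Real.exp (-(c * B)) * c = (c * B) * Real.exp (-(c * B)) := by ring
    _ ≤ Real.exp (c * B) * Real.exp (-(c * B)) :=
        mul_le_mul_of_nonneg_right hcb (Real.exp_nonneg _)
    _ = 1 := by rw [← Real.exp_add]; simp

lemma pow_term {δ : ℝ} (hδ : 0 < δ) (k : ℕ) (u : ℝ) :
    δ * (δ ^ (-((k : ℝ) + 1)) * u) ^ 2 = δ ^ (-(2 * (k : ℝ) + 1)) * u ^ 2 := by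
  have h : δ ^ (-(2 * (k : ℝ) + 1)) = δ * (δ ^ (-((k:ℝ) + 1))) ^ 2 := by
    rw [← Real.rpow_natCast (δ ^ (-((k:ℝ) + 1))) 2, ← Real.rpow_mul hδ.le]
    nth_rewrite 2 [← Real.rpow_one δ]
    rw [← Real.rpow_add hδ]
    congr 1
    push_cast
    ring
  rw [h]; ring

lemma gauss_pi_integrable {ι : Type*} [Fintype ι] {b : ℝ} (hb : 0 < b) (a : ι → ℝ) :
    Integrable (fun z : ι → ℝ => Real.exp (-(b * ∑ p, (z p - a p) ^ 2))) := by
  have h : ∀ z : ι → ℝ, Real.exp (-(b * ∑ p, (z p - a p) ^ 2)) =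
      ∏ p, Real.exp (-b * (z p - a p) ^ 2) := by
    intro z
    rw [← Real.exp_sum]
    congr 1
    rw [Finset.mul_sum, ← Finset.sum_neg_distrib]
    exact Finset.sum_congr rfl fun p _ => (neg_mul b _).symm
  simp only [h]
  exact Integrable.fintype_prod (f := fun p t => Real.exp (-b * (t - a p) ^ 2))
    fun p => (integrable_exp_neg_mul_sq hb).comp_sub_right (a p)

lemma gaussKer_eq (n d : ℕ) (c : ℝ) (θ : ((Fin n × Fin d) → ℝ) → (Fin n × Fin d) → ℝ)
    {t s : ℝ} (hts : t < s) (x y : (Fin n × Fin d) → ℝ) :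
    gaussKer n d c θ t s x y =
      (s - t) ^ (-(((n : ℝ) ^ 2 * (d : ℝ)) / 2)) *
        Real.exp (-(c * ∑ p : Fin n × Fin d,
          (s - t) ^ (-(2 * ((p.1 : ℕ) : ℝ) + 1)) * (θ x p - y p) ^ 2)) := by
  have hδ : 0 < s - t := sub_pos.mpr hts
  unfold gaussKer
  congr 3
  rw [mul_assoc]
  congr 1
  rw [Finset.mul_sum]
  exact Finset.sum_congr rfl fun p _ => pow_term hδ p.1 _

lemma coeff_lb {δ : ℝ} (hδ : 0 < δ) {n : ℕ} (i : Fin n) :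
    min (δ ^ (-(2 * (n : ℝ) - 1))) (δ ^ (-1 : ℝ)) ≤ δ ^ (-(2 * ((i : ℕ) : ℝ) + 1)) := by
  apply rpow_min_le hδ
  · have h := i.isLt
    have : ((i : ℕ) : ℝ) + 1 ≤ (n : ℝ) := by exact_mod_cast h
    linarith
  · have : (0 : ℝ) ≤ ((i : ℕ) : ℝ) := Nat.cast_nonneg _
    linarith

lemma gaussKer_nonneg (n d : ℕ) (c : ℝ) (θ : ((Fin n × Fin d) → ℝ) → (Fin n × Fin d) → ℝ)
    (t s : ℝ) (x y : (Fin n × Fin d) → ℝ) (hts : t ≤ s) :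
    0 ≤ gaussKer n d c θ t s x y := by
  unfold gaussKer
  have h : 0 ≤ s - t := by linarith
  positivity

lemma quasiDistV_nonneg (n d : ℕ) (u v : (Fin n × Fin d) → ℝ) :
    0 ≤ quasiDistV n d u v :=
  Finset.sum_nonneg fun i _ => Real.rpow_nonneg (Real.sqrt_nonneg _) _

lemma gaussKer_integrable (n d : ℕ) {c : ℝ} (hc : 0 < c)
    (θ : ((Fin n × Fin d) → ℝ) → (Fin n × Fin d) → ℝ) {t s : ℝ} (hts : t < s)
    (x : (Fin n × Fin d) → ℝ) :
    Integrable (gaussKer n d c θ t s x) := by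
  have hδ : 0 < s - t := sub_pos.mpr hts
  obtain ⟨m, hm0, hm⟩ : ∃ m : ℝ, 0 < m ∧
      m = min ((s - t) ^ (-(2 * (n : ℝ) - 1))) ((s - t) ^ (-1 : ℝ)) :=
    ⟨_, lt_min (Real.rpow_pos_of_pos hδ _) (Real.rpow_pos_of_pos hδ _), rfl⟩
  have hcont : Continuous (gaussKer n d c θ t s x) := by unfold gaussKer; fun_prop
  apply Integrable.mono'
    (((gauss_pi_integrable (mul_pos hc hm0) (θ x))).const_mul
      ((s - t) ^ (-(((n : ℝ) ^ 2 * (d : ℝ)) / 2))))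
    hcont.aestronglyMeasurable
  filter_upwards with y
  rw [Real.norm_eq_abs, abs_of_nonneg (gaussKer_nonneg n d c θ t s x y hts.le),
    gaussKer_eq n d c θ hts x y]
  apply mul_le_mul_of_nonneg_left _ (Real.rpow_nonneg hδ.le _)
  apply Real.exp_le_exp.mpr
  rw [neg_le_neg_iff, Finset.mul_sum, Finset.mul_sum]
  apply Finset.sum_le_sum
  intro p _
  have h1 : m ≤ (s - t) ^ (-(2 * ((p.1 : ℕ) : ℝ) + 1)) := hm ▸ coeff_lb hδ p.1
  have h2 : (y p - θ x p) ^ 2 = (θ x p - y p) ^ 2 := by ring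
  simp only [h2]
  exact le_trans (mul_le_mul_of_nonneg_right (mul_le_mul_of_nonneg_left h1 hc.le)
    (sq_nonneg (θ x p - y p))) (le_of_eq (mul_assoc _ _ _))

lemma quasi_bound (n d : ℕ) {δ : ℝ} (hδ : 0 < δ) (u v : (Fin n × Fin d) → ℝ) :
    quasiDistV n d u v ≤ δ ^ ((1:ℝ)/2) *
      ((n : ℝ) * (1 + Real.sqrt (∑ p : Fin n × Fin d,
        δ ^ (-(2 * ((p.1 : ℕ) : ℝ) + 1)) * (u p - v p) ^ 2))) := by
  set B : ℝ := ∑ p : Fin n × Fin d, δ ^ (-(2 * ((p.1 : ℕ) : ℝ) + 1)) * (u p - v p) ^ 2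
    with hBdef
  have hB0 : 0 ≤ B :=
    Finset.sum_nonneg fun p _ => mul_nonneg (Real.rpow_nonneg hδ.le _) (sq_nonneg _)
  clear_value B
  have hterm : ∀ i : Fin n,
      (Real.sqrt (∑ j : Fin d, (v (i, j) - u (i, j)) ^ 2)) ^ ((1 : ℝ) / (2 * (i : ℕ) + 1))
        ≤ δ ^ ((1:ℝ)/2) * (1 + Real.sqrt B) := by
    intro i
    have hm0 : 0 < (1 : ℝ) / (2 * ((i : ℕ) : ℝ) + 1) := by positivity
    have hs0 : 0 ≤ ∑ j : Fin d, (v (i, j) - u (i, j)) ^ 2 :=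
      Finset.sum_nonneg fun j _ => sq_nonneg _
    obtain ⟨si, hsi0, hsi⟩ : ∃ si : ℝ, 0 ≤ si ∧
        si = ∑ j : Fin d, (v (i, j) - u (i, j)) ^ 2 := ⟨_, hs0, rfl⟩
    rw [← hsi]
    have step1 : δ ^ (-(2 * ((i : ℕ) : ℝ) + 1)) * si ≤ B := by
      have h1 : δ ^ (-(2 * ((i : ℕ) : ℝ) + 1)) * si
          = ∑ j : Fin d, δ ^ (-(2 * ((i : ℕ) : ℝ) + 1)) * (u (i, j) - v (i, j)) ^ 2 := by
        rw [hsi, Finset.mul_sum]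
        exact Finset.sum_congr rfl fun j _ => by ring_nf
      rw [h1, hBdef, Fintype.sum_prod_type]
      exact Finset.single_le_sum
        (f := fun i' : Fin n => ∑ j : Fin d,
          δ ^ (-(2 * ((i' : ℕ) : ℝ) + 1)) * (u (i', j) - v (i', j)) ^ 2)
        (fun i' _ => Finset.sum_nonneg fun j _ =>
          mul_nonneg (Real.rpow_nonneg hδ.le _) (sq_nonneg _))
        (Finset.mem_univ i)
    have step2 : si ≤ δ ^ (2 * ((i : ℕ) : ℝ) + 1) * B := by
      rw [Real.rpow_neg hδ.le] at step1
      exact (inv_mul_le_iff₀ (Real.rpow_pos_of_pos hδ _)).mp step1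
    rw [Real.sqrt_eq_rpow, ← Real.rpow_mul hsi0]
    have h4 : si ^ ((1:ℝ)/2 * ((1:ℝ) / (2 * ((i : ℕ) : ℝ) + 1))) ≤
        (δ ^ (2 * ((i : ℕ) : ℝ) + 1) * B) ^ ((1:ℝ)/2 * ((1:ℝ) / (2 * ((i : ℕ) : ℝ) + 1))) :=
      Real.rpow_le_rpow hsi0 step2 (by positivity)
    rw [Real.mul_rpow (Real.rpow_nonneg hδ.le _) hB0] at h4
    have h5 : (δ ^ (2 * ((i : ℕ) : ℝ) + 1)) ^ ((1:ℝ)/2 * ((1:ℝ) / (2 * ((i : ℕ) : ℝ) + 1)))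
        = δ ^ ((1:ℝ)/2) := by
      rw [← Real.rpow_mul hδ.le]
      congr 1
      have : (2 * ((i : ℕ) : ℝ) + 1) ≠ 0 := by positivity
      field_simp
    rw [h5] at h4
    refine h4.trans (mul_le_mul_of_nonneg_left ?_ (Real.rpow_nonneg hδ.le _))
    have hS0 : 0 ≤ Real.sqrt B := Real.sqrt_nonneg B
    rcases le_total B 1 with hB1 | hB1
    · have := Real.rpow_le_one hB0 hB1
        (by positivity : (0:ℝ) ≤ (1:ℝ)/2 * ((1:ℝ) / (2 * ((i : ℕ) : ℝ) + 1)))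
      linarith
    · have hm1 : (1:ℝ) / (2 * ((i : ℕ) : ℝ) + 1) ≤ 1 := by
        rw [div_le_one (by positivity)]
        have : (0:ℝ) ≤ ((i : ℕ) : ℝ) := Nat.cast_nonneg _
        linarith
      have h6 : B ^ ((1:ℝ)/2 * ((1:ℝ) / (2 * ((i : ℕ) : ℝ) + 1))) ≤ B ^ ((1:ℝ)/2) :=
        Real.rpow_le_rpow_of_exponent_le hB1 (by nlinarith)
      rw [← Real.sqrt_eq_rpow] at h6
      linarith
  calc quasiDistV n d u v ≤ ∑ _i : Fin n, δ ^ ((1:ℝ)/2) * (1 + Real.sqrt B) :=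
        Finset.sum_le_sum fun i _ => hterm i
    _ = (n : ℝ) * (δ ^ ((1:ℝ)/2) * (1 + Real.sqrt B)) := by
        rw [Finset.sum_const, Finset.card_univ, Fintype.card_fin, nsmul_eq_mul]
    _ = δ ^ ((1:ℝ)/2) * ((n : ℝ) * (1 + Real.sqrt B)) := by ring

set_option maxHeartbeats 1000000 in
lemma pointwise_bound (n d : ℕ) (hn : 1 ≤ n) {c γ t s : ℝ} (hc : 0 < c) (hγ0 : 0 < γ)
    (hγ1 : γ ≤ 1) (θ : ((Fin n × Fin d) → ℝ) → (Fin n × Fin d) → ℝ) (hts : t < s)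
    (x y : (Fin n × Fin d) → ℝ) :
    gaussKer n d c θ t s x y * quasiDistV n d (θ x) y ^ γ ≤
      (s - t) ^ (γ / 2) * ((n : ℝ) * (1 + Real.sqrt (1 / c))) *
        ((s - t) ^ (-(((n : ℝ) ^ 2 * (d : ℝ)) / 2)) *
          Real.exp (-(c / 2 * ∑ p : Fin n × Fin d,
            (s - t) ^ (-(2 * ((p.1 : ℕ) : ℝ) + 1)) * (θ x p - y p) ^ 2))) := by
  have hδ : 0 < s - t := sub_pos.mpr hts
  have hN1 : (1 : ℝ) ≤ (n : ℝ) := by exact_mod_cast hn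
  have hq := quasi_bound n d hδ (θ x) y
  have hd0 : 0 ≤ quasiDistV n d (θ x) y := quasiDistV_nonneg n d (θ x) y
  rw [gaussKer_eq n d c θ hts x y]
  obtain ⟨B, hB⟩ : ∃ B : ℝ, B = ∑ p : Fin n × Fin d,
      (s - t) ^ (-(2 * ((p.1 : ℕ) : ℝ) + 1)) * (θ x p - y p) ^ 2 := ⟨_, rfl⟩
  rw [← hB] at hq ⊢
  obtain ⟨dd, hdd0, hdd⟩ : ∃ dd : ℝ, 0 ≤ dd ∧
      dd = quasiDistV n d (θ x) y := ⟨_, hd0, rfl⟩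
  rw [← hdd] at hq ⊢
  obtain ⟨δ, hδ0, hδT⟩ : ∃ δ : ℝ, 0 < δ ∧ δ = s - t := ⟨_, hδ, rfl⟩
  rw [← hδT] at hq ⊢
  have hB0 : 0 ≤ B := by
    rw [hB]
    exact Finset.sum_nonneg fun p _ => mul_nonneg (Real.rpow_nonneg hδ.le _) (sq_nonneg _)
  clear hB hdd hδT hd0
  have hS0 : 0 ≤ Real.sqrt B := Real.sqrt_nonneg B
  have hNB0 : (0:ℝ) ≤ (n : ℝ) * (1 + Real.sqrt B) := by nlinarith
  have hdγ : dd ^ γ ≤ δ ^ (γ / 2) * ((n : ℝ) * (1 + Real.sqrt B)) := by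
    have h1 : dd ^ γ ≤ (δ ^ ((1:ℝ)/2) * ((n : ℝ) * (1 + Real.sqrt B))) ^ γ :=
      Real.rpow_le_rpow hdd0 hq hγ0.le
    have h2 : (δ ^ ((1:ℝ)/2) * ((n : ℝ) * (1 + Real.sqrt B))) ^ γ =
        (δ ^ ((1:ℝ)/2)) ^ γ * ((n : ℝ) * (1 + Real.sqrt B)) ^ γ :=
      Real.mul_rpow (Real.rpow_nonneg hδ0.le _) hNB0
    have h3 : (δ ^ ((1:ℝ)/2)) ^ γ = δ ^ (γ / 2) := by
      rw [← Real.rpow_mul hδ0.le]; congr 1; ring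
    have hM1 : (1 : ℝ) ≤ (n : ℝ) * (1 + Real.sqrt B) := by nlinarith
    have h4 : ((n : ℝ) * (1 + Real.sqrt B)) ^ γ ≤ (n : ℝ) * (1 + Real.sqrt B) := by
      calc ((n : ℝ) * (1 + Real.sqrt B)) ^ γ ≤ ((n : ℝ) * (1 + Real.sqrt B)) ^ (1:ℝ) :=
            Real.rpow_le_rpow_of_exponent_le hM1 hγ1
        _ = (n : ℝ) * (1 + Real.sqrt B) := Real.rpow_one _
    calc dd ^ γ ≤ (δ ^ ((1:ℝ)/2)) ^ γ * (((n : ℝ)) * (1 + Real.sqrt B)) ^ γ := by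
          rw [← h2]; exact h1
      _ ≤ (δ ^ ((1:ℝ)/2)) ^ γ * ((n : ℝ) * (1 + Real.sqrt B)) :=
          mul_le_mul_of_nonneg_left h4 (Real.rpow_nonneg (Real.rpow_nonneg hδ0.le _) _)
      _ = δ ^ (γ / 2) * ((n : ℝ) * (1 + Real.sqrt B)) := by rw [h3]
  have hEsplit : Real.exp (-(c * B)) =
      Real.exp (-(c / 2 * B)) * Real.exp (-(c / 2 * B)) := by
    rw [← Real.exp_add]; congr 1; ring
  have h7 : (1 + Real.sqrt B) * Real.exp (-(c / 2 * B)) ≤ 1 + Real.sqrt (1 / c) := by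
    have he1 : Real.exp (-(c / 2 * B)) ≤ 1 := by
      apply Real.exp_le_one_iff.mpr
      have := mul_nonneg (half_pos hc).le hB0
      linarith
    have h8 := sqrt_mul_exp_le hc hB0
    have hE0 : 0 ≤ Real.exp (-(c / 2 * B)) := Real.exp_nonneg _
    nlinarith
  have hA0 : 0 ≤ δ ^ (-(((n : ℝ) ^ 2 * (d : ℝ)) / 2)) := Real.rpow_nonneg hδ0.le _
  calc δ ^ (-(((n : ℝ) ^ 2 * (d : ℝ)) / 2)) * Real.exp (-(c * B)) * dd ^ γ
      ≤ δ ^ (-(((n : ℝ) ^ 2 * (d : ℝ)) / 2)) * Real.exp (-(c * B)) *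
          (δ ^ (γ / 2) * ((n : ℝ) * (1 + Real.sqrt B))) :=
        mul_le_mul_of_nonneg_left hdγ (mul_nonneg hA0 (Real.exp_nonneg _))
    _ = δ ^ (γ / 2) * (n : ℝ) * (δ ^ (-(((n : ℝ) ^ 2 * (d : ℝ)) / 2)) *
          ((1 + Real.sqrt B) * Real.exp (-(c / 2 * B))) * Real.exp (-(c / 2 * B))) := by
        rw [hEsplit]; ring
    _ ≤ δ ^ (γ / 2) * (n : ℝ) * (δ ^ (-(((n : ℝ) ^ 2 * (d : ℝ)) / 2)) *
          (1 + Real.sqrt (1 / c)) * Real.exp (-(c / 2 * B))) := by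
        apply mul_le_mul_of_nonneg_left _
          (mul_nonneg (Real.rpow_nonneg hδ0.le _) (by linarith))
        apply mul_le_mul_of_nonneg_right _ (Real.exp_nonneg _)
        exact mul_le_mul_of_nonneg_left h7 hA0
    _ = δ ^ (γ / 2) * ((n : ℝ) * (1 + Real.sqrt (1 / c))) *
          (δ ^ (-(((n : ℝ) ^ 2 * (d : ℝ)) / 2)) * Real.exp (-(c / 2 * B))) := by ring

end GaussHolderAux

open GaussHolderAux

set_option maxHeartbeats 1000000 in
/-- Gaussian off-diagonal to Hölder-gain estimate.  If the kernel `q` has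
total mass `∫ q(t,s,x,y) dy ≤ C₀` uniformly over `0 ≤ t < s ≤ T` and `x`, then for every
`γ ∈ (0,1]` there is `C` with
`∫ q(t,s,x,y) d(θ(x),y)^γ dy ≤ C (s-t)^{γ/2}` for all `0 ≤ t < s ≤ T` and all `x`. -/
theorem gaussKer_holder_gain (n d : ℕ) (hn : 1 ≤ n) (hd : 1 ≤ d)
    (T c : ℝ) (hT : 0 < T) (hc : 0 < c)
    (θ : ((Fin n × Fin d) → ℝ) → (Fin n × Fin d) → ℝ) (C₀ : ℝ)
    (hmass : ∀ t s : ℝ, 0 ≤ t → t < s → s ≤ T → ∀ x : (Fin n × Fin d) → ℝ,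
      (∫ y : (Fin n × Fin d) → ℝ, gaussKer n d c θ t s x y) ≤ C₀) :
    ∀ γ : ℝ, 0 < γ → γ ≤ 1 → ∃ C : ℝ,
      ∀ t s : ℝ, 0 ≤ t → t < s → s ≤ T → ∀ x : (Fin n × Fin d) → ℝ,
        (∫ y : (Fin n × Fin d) → ℝ,
            gaussKer n d c θ t s x y * quasiDistV n d (θ x) y ^ γ)
          ≤ C * (s - t) ^ (γ / 2) := by
  intro γ hγ0 hγ1
  have hN1 : (1 : ℝ) ≤ (n : ℝ) := by exact_mod_cast hn
  have hN0 : (0 : ℝ) < (n : ℝ) := lt_of_lt_of_le one_pos hN1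
  obtain ⟨m₀, hm₀pos, hm₀⟩ : ∃ m₀ : ℝ, 0 < m₀ ∧
      m₀ = min (T ^ (-(2 * (n : ℝ) - 1))) (T ^ (-1 : ℝ)) :=
    ⟨_, lt_min (Real.rpow_pos_of_pos hT _) (Real.rpow_pos_of_pos hT _), rfl⟩
  obtain ⟨b₂, hb₂pos, hb₂⟩ : ∃ b₂ : ℝ, 0 < b₂ ∧ b₂ = c / 2 * m₀ :=
    ⟨_, mul_pos (half_pos hc) hm₀pos, rfl⟩
  obtain ⟨G, hGdef⟩ : ∃ G : ℝ,
      G = ∫ z : (Fin n × Fin d) → ℝ, Real.exp (-(b₂ * ∑ p : Fin n × Fin d, (z p) ^ 2)) := ⟨_, rfl⟩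
  have hG0 : 0 ≤ G := by
    rw [hGdef]
    exact integral_nonneg fun z => Real.exp_nonneg _
  obtain ⟨P, hP0, hPdef⟩ : ∃ P : ℝ, 0 ≤ P ∧ P = ((n : ℝ) ^ 2 * (d : ℝ)) / 2 :=
    ⟨_, by positivity, rfl⟩
  obtain ⟨K, hK1, hKdef⟩ : ∃ K : ℝ, 1 ≤ K ∧ K = 1 + Real.sqrt (1 / c) :=
    ⟨_, by { have := Real.sqrt_nonneg (1 / c); linarith }, rfl⟩
  have hK0 : (0 : ℝ) < K := lt_of_lt_of_le one_pos hK1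
  have hC₀ : 0 ≤ C₀ := by
    have h0 : 0 ≤ ∫ y : (Fin n × Fin d) → ℝ, gaussKer n d c θ 0 T 0 y :=
      integral_nonneg fun y => gaussKer_nonneg n d c θ 0 T 0 y hT.le
    exact le_trans h0 (hmass 0 T le_rfl hT le_rfl 0)
  have h2P0 : (0 : ℝ) ≤ (2 : ℝ) ^ P := Real.rpow_nonneg (by norm_num) _
  have hTP0 : (0 : ℝ) ≤ (T / 2) ^ (-P) := Real.rpow_nonneg (by positivity) _
  refine ⟨(n : ℝ) * K * ((2 : ℝ) ^ P * C₀ + (T / 2) ^ (-P) * G), ?_⟩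
  intro t s ht hts hsT x
  have hδ : 0 < s - t := sub_pos.mpr hts
  have hδT : s - t ≤ T := by linarith
  have hγ20 : 0 ≤ (s - t) ^ (γ / 2) := Real.rpow_nonneg hδ.le _
  have hpt : ∀ y, gaussKer n d c θ t s x y * quasiDistV n d (θ x) y ^ γ ≤
      (s - t) ^ (γ / 2) * ((n : ℝ) * K) * ((s - t) ^ (-P) *
        Real.exp (-(c / 2 * ∑ p : Fin n × Fin d,
          (s - t) ^ (-(2 * ((p.1 : ℕ) : ℝ) + 1)) * (θ x p - y p) ^ 2))) := by
    intro y
    rw [hKdef, hPdef]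
    exact pointwise_bound n d hn hc hγ0 hγ1 θ hts x y
  have hf0 : ∀ y, 0 ≤ gaussKer n d c θ t s x y * quasiDistV n d (θ x) y ^ γ :=
    fun y => mul_nonneg (gaussKer_nonneg n d c θ t s x y hts.le)
      (Real.rpow_nonneg (quasiDistV_nonneg n d (θ x) y) _)
  rcases le_or_gt (2 * (s - t)) T with hcase | hcase
  · -- small gap: absorb into the kernel at time gap 2(s-t)
    have h2δ : (0 : ℝ) < 2 * (s - t) := by linarith
    have habs : ∀ y : (Fin n × Fin d) → ℝ, (s - t) ^ (-P) * Real.exp (-(c / 2 * ∑ p : Fin n × Fin d,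
          (s - t) ^ (-(2 * ((p.1 : ℕ) : ℝ) + 1)) * (θ x p - y p) ^ 2)) ≤
        (2 : ℝ) ^ P * gaussKer n d c θ 0 (2 * (s - t)) x y := by
      intro y
      rw [hPdef, gaussKer_eq n d c θ (by linarith : (0:ℝ) < 2 * (s - t)) x y]
      simp only [sub_zero]
      have h1 : (s - t) ^ (-(((n : ℝ) ^ 2 * (d : ℝ)) / 2)) =
          (2 : ℝ) ^ (((n : ℝ) ^ 2 * (d : ℝ)) / 2) *
            (2 * (s - t)) ^ (-(((n : ℝ) ^ 2 * (d : ℝ)) / 2)) := by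
        rw [Real.mul_rpow (by norm_num : (0:ℝ) ≤ 2) hδ.le, ← mul_assoc,
          ← Real.rpow_add (by norm_num : (0:ℝ) < 2)]
        simp
      have h2 : c * ∑ p : Fin n × Fin d,
          (2 * (s - t)) ^ (-(2 * ((p.1 : ℕ) : ℝ) + 1)) * (θ x p - y p) ^ 2 ≤
          c / 2 * ∑ p : Fin n × Fin d,
            (s - t) ^ (-(2 * ((p.1 : ℕ) : ℝ) + 1)) * (θ x p - y p) ^ 2 := by
        rw [Finset.mul_sum, Finset.mul_sum]
        apply Finset.sum_le_sum
        intro p _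
        have he : (2 : ℝ) ^ (-(2 * ((p.1 : ℕ) : ℝ) + 1)) ≤ (2:ℝ)⁻¹ := by
          rw [← Real.rpow_neg_one 2]
          apply Real.rpow_le_rpow_of_exponent_le one_le_two
          have : (0 : ℝ) ≤ ((p.1 : ℕ) : ℝ) := Nat.cast_nonneg _
          linarith
        rw [Real.mul_rpow (by norm_num : (0:ℝ) ≤ 2) hδ.le]
        have h3 : (2 : ℝ) ^ (-(2 * ((p.1 : ℕ) : ℝ) + 1)) *
              (s - t) ^ (-(2 * ((p.1 : ℕ) : ℝ) + 1))
            ≤ (2:ℝ)⁻¹ * (s - t) ^ (-(2 * ((p.1 : ℕ) : ℝ) + 1)) :=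
          mul_le_mul_of_nonneg_right he (Real.rpow_nonneg hδ.le _)
        have hsq := sq_nonneg (θ x p - y p)
        nlinarith [mul_le_mul_of_nonneg_left (mul_le_mul_of_nonneg_right h3 hsq) hc.le]
      rw [h1, mul_assoc]
      apply mul_le_mul_of_nonneg_left _ (Real.rpow_nonneg (by norm_num : (0:ℝ) ≤ 2) _)
      apply mul_le_mul_of_nonneg_left _ (Real.rpow_nonneg (by linarith : (0:ℝ) ≤ 2 * (s - t)) _)
      exact Real.exp_le_exp.mpr (by linarith)
    have hNK2P : 0 ≤ (s - t) ^ (γ / 2) * ((n : ℝ) * K) * (2 : ℝ) ^ P :=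
      mul_nonneg (mul_nonneg hγ20 (mul_nonneg hN0.le hK0.le)) h2P0
    have hint : Integrable (fun y => ((s - t) ^ (γ / 2) * ((n : ℝ) * K) * (2 : ℝ) ^ P) *
        gaussKer n d c θ 0 (2 * (s - t)) x y) :=
      (gaussKer_integrable n d hc θ (by linarith : (0:ℝ) < 2 * (s - t)) x).const_mul _
    have hle : (∫ y : (Fin n × Fin d) → ℝ,
        gaussKer n d c θ t s x y * quasiDistV n d (θ x) y ^ γ) ≤
        ((s - t) ^ (γ / 2) * ((n : ℝ) * K) * (2 : ℝ) ^ P) *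
          ∫ y, gaussKer n d c θ 0 (2 * (s - t)) x y := by
      rw [← integral_const_mul]
      apply integral_mono_of_nonneg (Filter.Eventually.of_forall hf0) hint
      filter_upwards with y
      calc gaussKer n d c θ t s x y * quasiDistV n d (θ x) y ^ γ
          ≤ (s - t) ^ (γ / 2) * ((n : ℝ) * K) * ((s - t) ^ (-P) *
              Real.exp (-(c / 2 * ∑ p : Fin n × Fin d,
                (s - t) ^ (-(2 * ((p.1 : ℕ) : ℝ) + 1)) * (θ x p - y p) ^ 2))) := hpt y
        _ ≤ (s - t) ^ (γ / 2) * ((n : ℝ) * K) *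
              ((2 : ℝ) ^ P * gaussKer n d c θ 0 (2 * (s - t)) x y) :=
            mul_le_mul_of_nonneg_left (habs y)
              (mul_nonneg hγ20 (mul_nonneg hN0.le hK0.le))
        _ = ((s - t) ^ (γ / 2) * ((n : ℝ) * K) * (2 : ℝ) ^ P) *
              gaussKer n d c θ 0 (2 * (s - t)) x y := by ring
    have hmass' : (∫ y, gaussKer n d c θ 0 (2 * (s - t)) x y) ≤ C₀ :=
      hmass 0 (2 * (s - t)) le_rfl h2δ hcase x
    calc (∫ y : (Fin n × Fin d) → ℝ,
          gaussKer n d c θ t s x y * quasiDistV n d (θ x) y ^ γ)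
        ≤ ((s - t) ^ (γ / 2) * ((n : ℝ) * K) * (2 : ℝ) ^ P) *
            ∫ y, gaussKer n d c θ 0 (2 * (s - t)) x y := hle
      _ ≤ ((s - t) ^ (γ / 2) * ((n : ℝ) * K) * (2 : ℝ) ^ P) * C₀ :=
          mul_le_mul_of_nonneg_left hmass' hNK2P
      _ ≤ (n : ℝ) * K * ((2 : ℝ) ^ P * C₀ + (T / 2) ^ (-P) * G) * (s - t) ^ (γ / 2) := by
          nlinarith [mul_nonneg (mul_nonneg (mul_nonneg (mul_nonneg hN0.le hK0.le) hTP0)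
            hG0) hγ20]
  · -- large gap: compare with a fixed Gaussian
    have hT2 : T / 2 < s - t := by linarith
    have habs2 : ∀ y : (Fin n × Fin d) → ℝ, (s - t) ^ (-P) * Real.exp (-(c / 2 * ∑ p : Fin n × Fin d,
          (s - t) ^ (-(2 * ((p.1 : ℕ) : ℝ) + 1)) * (θ x p - y p) ^ 2)) ≤
        (T / 2) ^ (-P) * Real.exp (-(b₂ * ∑ p : Fin n × Fin d, (y p - θ x p) ^ 2)) := by
      intro y
      have h1 : (s - t) ^ (-P) ≤ (T / 2) ^ (-P) :=
        Real.rpow_le_rpow_of_nonpos (by positivity) hT2.le (by linarith)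
      have h2 : b₂ * ∑ p : Fin n × Fin d, (y p - θ x p) ^ 2 ≤ c / 2 * ∑ p : Fin n × Fin d,
          (s - t) ^ (-(2 * ((p.1 : ℕ) : ℝ) + 1)) * (θ x p - y p) ^ 2 := by
        rw [Finset.mul_sum, Finset.mul_sum]
        apply Finset.sum_le_sum
        intro p _
        have hm : m₀ ≤ (s - t) ^ (-(2 * ((p.1 : ℕ) : ℝ) + 1)) := by
          rw [hm₀]
          refine le_trans (coeff_lb hT p.1) (Real.rpow_le_rpow_of_nonpos hδ hδT ?_)
          have : (0 : ℝ) ≤ ((p.1 : ℕ) : ℝ) := Nat.cast_nonneg _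
          linarith
        have hsq : (y p - θ x p) ^ 2 = (θ x p - y p) ^ 2 := by ring
        rw [hb₂, hsq]
        calc c / 2 * m₀ * (θ x p - y p) ^ 2
            ≤ c / 2 * (s - t) ^ (-(2 * ((p.1 : ℕ) : ℝ) + 1)) * (θ x p - y p) ^ 2 :=
              mul_le_mul_of_nonneg_right
                (mul_le_mul_of_nonneg_left hm (half_pos hc).le) (sq_nonneg _)
          _ = c / 2 * ((s - t) ^ (-(2 * ((p.1 : ℕ) : ℝ) + 1)) * (θ x p - y p) ^ 2) := by
              ring
      calc (s - t) ^ (-P) * Real.exp (-(c / 2 * ∑ p : Fin n × Fin d,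
            (s - t) ^ (-(2 * ((p.1 : ℕ) : ℝ) + 1)) * (θ x p - y p) ^ 2))
          ≤ (T / 2) ^ (-P) * Real.exp (-(c / 2 * ∑ p : Fin n × Fin d,
              (s - t) ^ (-(2 * ((p.1 : ℕ) : ℝ) + 1)) * (θ x p - y p) ^ 2)) :=
            mul_le_mul_of_nonneg_right h1 (Real.exp_nonneg _)
        _ ≤ (T / 2) ^ (-P) * Real.exp (-(b₂ * ∑ p : Fin n × Fin d, (y p - θ x p) ^ 2)) :=
            mul_le_mul_of_nonneg_left (Real.exp_le_exp.mpr (by linarith)) hTP0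
    have hint2 : Integrable (fun y : (Fin n × Fin d) → ℝ =>
        ((s - t) ^ (γ / 2) * ((n : ℝ) * K) * (T / 2) ^ (-P)) *
          Real.exp (-(b₂ * ∑ p : Fin n × Fin d, (y p - θ x p) ^ 2))) :=
      (gauss_pi_integrable hb₂pos (θ x)).const_mul _
    have htrans : (∫ y : (Fin n × Fin d) → ℝ,
        Real.exp (-(b₂ * ∑ p : Fin n × Fin d, (y p - θ x p) ^ 2))) = G := by
      have h := MeasureTheory.integral_add_right_eq_self (μ := volume)
        (fun z : (Fin n × Fin d) → ℝ => Real.exp (-(b₂ * ∑ p : Fin n × Fin d, (z p) ^ 2))) (-(θ x))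
      simp only [Pi.add_apply, Pi.neg_apply, ← sub_eq_add_neg] at h
      rw [hGdef, ← h]
    have hle : (∫ y : (Fin n × Fin d) → ℝ,
        gaussKer n d c θ t s x y * quasiDistV n d (θ x) y ^ γ) ≤
        ((s - t) ^ (γ / 2) * ((n : ℝ) * K) * (T / 2) ^ (-P)) *
          ∫ y : (Fin n × Fin d) → ℝ, Real.exp (-(b₂ * ∑ p : Fin n × Fin d, (y p - θ x p) ^ 2)) := by
      rw [← integral_const_mul]
      apply integral_mono_of_nonneg (Filter.Eventually.of_forall hf0) hint2
      filter_upwards with y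
      calc gaussKer n d c θ t s x y * quasiDistV n d (θ x) y ^ γ
          ≤ (s - t) ^ (γ / 2) * ((n : ℝ) * K) * ((s - t) ^ (-P) *
              Real.exp (-(c / 2 * ∑ p : Fin n × Fin d,
                (s - t) ^ (-(2 * ((p.1 : ℕ) : ℝ) + 1)) * (θ x p - y p) ^ 2))) := hpt y
        _ ≤ (s - t) ^ (γ / 2) * ((n : ℝ) * K) *
              ((T / 2) ^ (-P) * Real.exp (-(b₂ * ∑ p : Fin n × Fin d, (y p - θ x p) ^ 2))) :=
            mul_le_mul_of_nonneg_left (habs2 y)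
              (mul_nonneg hγ20 (mul_nonneg hN0.le hK0.le))
        _ = ((s - t) ^ (γ / 2) * ((n : ℝ) * K) * (T / 2) ^ (-P)) *
              Real.exp (-(b₂ * ∑ p : Fin n × Fin d, (y p - θ x p) ^ 2)) := by ring
    calc (∫ y : (Fin n × Fin d) → ℝ,
          gaussKer n d c θ t s x y * quasiDistV n d (θ x) y ^ γ)
        ≤ ((s - t) ^ (γ / 2) * ((n : ℝ) * K) * (T / 2) ^ (-P)) *
            ∫ y : (Fin n × Fin d) → ℝ, Real.exp (-(b₂ * ∑ p : Fin n × Fin d, (y p - θ x p) ^ 2)) := hle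
      _ = ((s - t) ^ (γ / 2) * ((n : ℝ) * K) * (T / 2) ^ (-P)) * G := by rw [htrans]
      _ ≤ (n : ℝ) * K * ((2 : ℝ) ^ P * C₀ + (T / 2) ^ (-P) * G) * (s - t) ^ (γ / 2) := by
          nlinarith [mul_nonneg (mul_nonneg (mul_nonneg (mul_nonneg hN0.le hK0.le) h2P0)
            hC₀) hγ20]
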